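/- If a d-regular graph G admits a k-partial c-coloring with k ≥ ((c−1)/c)·d + 1, and each graph of maximum degree x is properly colorable with x+1 colors, then G is properly colorable with at most d colors. -/

import Mathlib

/-- If a `d`-regular graph `G` admits a `k`-partial `c`-coloring with
`k ≥ ((c-1)/c)·d + 1` (stated without division as `c * k ≥ (c-1) * d + c`), and every
graph on `V` of maximum degree `x` is properly colorable with `x + 1` colors, then `G`
is properly colorable with at most `d` colors. -/
theorem partial_coloring_gives_proper_coloring
    {V : Type*} [Fintype V] [DecidableEq V]
    (G : SimpleGraph V) [DecidableRel G.Adj] (d c k : ℕ) (hc : 1 ≤ c)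
    (hreg : G.IsRegularOfDegree d)
    (hk : (c - 1) * d + c ≤ c * k)
    (f : V → Fin c)
    (hpartial : ∀ v : V, k ≤ ((G.neighborFinset v).filter fun u => f u ≠ f v).card)
    (hgreedy : ∀ (H : SimpleGraph V) (_ : DecidableRel H.Adj) (x : ℕ),
      (∀ v : V, H.degree v ≤ x) → H.Colorable (x + 1)) :
    G.Colorable d := by
  by_cases hV : Nonempty V
  swap
  · exact ⟨⟨fun v => absurd ⟨v⟩ hV, fun {a} _ _ => absurd ⟨a⟩ hV⟩⟩
  obtain ⟨v0⟩ := hV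
  have hkd : k ≤ d := by
    calc k ≤ ((G.neighborFinset v0).filter fun u => f u ≠ f v0).card := hpartial v0
    _ ≤ (G.neighborFinset v0).card := Finset.card_filter_le _ _
    _ = d := hreg v0
  -- the monochromatic subgraph
  let H : SimpleGraph V :=
    { Adj := fun u v => G.Adj u v ∧ f u = f v
      symm := ⟨fun u v ⟨h1, h2⟩ => ⟨h1.symm, h2.symm⟩⟩
      loopless := ⟨fun u ⟨h1, _⟩ => G.loopless.irrefl u h1⟩ }
  have hHdec : DecidableRel H.Adj := fun u v => instDecidableAnd
  have hdeg : ∀ v : V, H.degree v ≤ d - k := by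
    intro v
    have hnb : H.neighborFinset v = (G.neighborFinset v).filter fun u => ¬ f u ≠ f v := by
      ext u
      simp only [H, SimpleGraph.mem_neighborFinset, Finset.mem_filter, not_not]
      exact ⟨fun ⟨h1, h2⟩ => ⟨h1, h2.symm⟩, fun ⟨h1, h2⟩ => ⟨h1, h2.symm⟩⟩
    have hsplit := Finset.card_filter_add_card_filter_not
      (s := G.neighborFinset v) (p := fun u => f u ≠ f v)
    rw [SimpleGraph.degree, hnb]
    have h1 := hpartial v
    have h2 : (G.neighborFinset v).card = d := hreg v
    omega
  have hcol := hgreedy H hHdec (d - k) hdeg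
  obtain ⟨C⟩ := hcol
  -- combine
  let g : V → Fin c × Fin (d - k + 1) := fun v => (f v, C v)
  have hprop : ∀ {u v : V}, G.Adj u v → g u ≠ g v := by
    intro u v huv heq
    have hf : f u = f v := congrArg Prod.fst heq
    have hC : C u = C v := congrArg Prod.snd heq
    exact C.valid (show H.Adj u v from ⟨huv, hf⟩) hC
  have hcol2 : G.Colorable (c * (d - k + 1)) := by
    have : G.Colorable (Fintype.card (Fin c × Fin (d - k + 1))) :=
      (SimpleGraph.Coloring.mk g hprop).colorable
    simpa using this
  refine hcol2.mono ?_
  obtain ⟨c', rfl⟩ : ∃ c', c = c' + 1 := ⟨c - 1, (Nat.succ_pred_eq_of_pos hc).symm⟩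
  obtain ⟨m, rfl⟩ : ∃ m, d = k + m := ⟨d - k, by omega⟩
  simp only [Nat.add_sub_cancel, Nat.add_sub_cancel_left] at hk ⊢
  nlinarith [hk]
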